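/- Let a ≥ b ≥ |c| with (a,b,c) ≠ (0,0,0) and a > 0, and set w₁ = (a,−b,−c)ᵀ, w₂ = (b,c,a)ᵀ, w₃ = (c,a,b)ᵀ, w₄ = (b,−c,−a)ᵀ, w₅ = (−c,a,−b)ᵀ. Then with D = a³ + 5a²b + 3ab² − 5ac² − b³ + bc² > 0 and x₁ = (a−b)(a+b+c)(a+b−c)/D, x₂ = a(a+b−c)(b+c)/D, x₃ = a(a+b+c)(b−c)/D, one has (a,b,c)ᵀ = μ·(x₁w₁ + x₂(w₂+w₃) + x₃(w₄+w₅)) for some μ > 0, x₁,x₂,x₃ ≥ 0, and x₁ + 2(x₂+x₃) = 1. -/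

import Mathlib

/-- A vertex `w = (a,b,c)` of the orbit polytope of the pure rotational
tetrahedral group is, up to a positive factor, a convex combination of its five
neighbours `w₁ = (a,−b,−c)`, `w₂ = (b,c,a)`, `w₃ = (c,a,b)`, `w₄ = (b,−c,−a)`,
`w₅ = (−c,a,−b)`, with weights `x₁, x₂, x₂, x₃, x₃` given by the stated rational
expressions, where `D = a³+5a²b+3ab²−5ac²−b³+bc² > 0`, the weights are
nonnegative, and `x₁ + 2(x₂+x₃) = 1`. -/
theorem tetrahedral_orbit_weights (a b c : ℝ)
    (hab : b ≤ a) (hbc : |c| ≤ b) (ha : 0 < a)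
    (w₁ w₂ w₃ w₄ w₅ : Fin 3 → ℝ)
    (hw₁ : w₁ = ![a, -b, -c]) (hw₂ : w₂ = ![b, c, a]) (hw₃ : w₃ = ![c, a, b])
    (hw₄ : w₄ = ![b, -c, -a]) (hw₅ : w₅ = ![-c, a, -b])
    (D x₁ x₂ x₃ : ℝ)
    (hD : D = a^3 + 5*a^2*b + 3*a*b^2 - 5*a*c^2 - b^3 + b*c^2)
    (hx₁ : x₁ = (a - b) * (a + b + c) * (a + b - c) / D)
    (hx₂ : x₂ = a * (a + b - c) * (b + c) / D)
    (hx₃ : x₃ = a * (a + b + c) * (b - c) / D) :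
    0 < D ∧ 0 ≤ x₁ ∧ 0 ≤ x₂ ∧ 0 ≤ x₃ ∧ x₁ + 2 * (x₂ + x₃) = 1 ∧
    ∃ μ : ℝ, 0 < μ ∧
      ![a, b, c] = μ • (x₁ • w₁ + x₂ • (w₂ + w₃) + x₃ • (w₄ + w₅)) := by
  have habs := abs_le.mp hbc
  have hcb : -b ≤ c := habs.1
  have hcb' : c ≤ b := habs.2
  have hb : 0 ≤ b := (abs_nonneg c).trans hbc
  have hcsq : c^2 ≤ b^2 := by nlinarith [sq_abs c]
  have hDpos : 0 < D := by
    nlinarith [mul_nonneg ha.le (sub_nonneg.mpr hcsq), mul_nonneg hb (sq_nonneg c),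
      mul_nonneg (mul_nonneg ha.le hb) (sub_nonneg.mpr hab), pow_pos ha 3,
      mul_nonneg (sub_nonneg.mpr hab) (sq_nonneg b)]
  have hE : 0 < a^3 + a^2*b + a*b^2 + b^3 + a*c^2 - b*c^2 := by nlinarith
  refine ⟨hDpos, ?_, ?_, ?_, ?_, ?_⟩
  · rw [hx₁]
    apply div_nonneg _ hDpos.le
    have : 0 ≤ a - b := by linarith
    nlinarith
  · rw [hx₂]
    apply div_nonneg _ hDpos.le
    nlinarith
  · rw [hx₃]
    apply div_nonneg _ hDpos.le
    nlinarith
  · rw [hx₁, hx₂, hx₃]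
    field_simp
    rw [hD]; ring
  · refine ⟨D / (a^3 + a^2*b + a*b^2 + b^3 + a*c^2 - b*c^2), div_pos hDpos hE, ?_⟩
    subst hw₁ hw₂ hw₃ hw₄ hw₅ hx₁ hx₂ hx₃
    funext i
    fin_cases i <;>
      simp [Matrix.cons_val_zero, Matrix.cons_val_one, Matrix.head_cons] <;>
      field_simp <;> rw [eq_div_iff (ne_of_gt (by linarith [hE]))] <;> ring
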